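/- Let $A \in \mathbb{R}^{n\times m}$ be a real matrix, $c \in \mathbb{R}^m$, and $\Delta > 0$. A vector $v^* \in \mathbb{R}^n$ is a global minimizer of $v \mapsto \|c + A^T v\|^2$ over the ball $\{v \in \mathbb{R}^n : \|v\| \le \Delta\}$ if and only if $\|v^*\| \le \Delta$ and there exists a scalar $\eta \ge 0$ such that $(A A^T + \eta I)v^* = -A c$ and $\eta(\Delta - \|v^*\|) = 0$. -/

import Mathlib

open Matrix
open scoped RealInnerProductSpace

private lemma trn_aux_arith (r K : ℝ) (hr : r < 0) (hK : 0 ≤ K)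
    (h : ∀ t : ℝ, 0 < t → t ≤ 1 → 0 ≤ 2 * (t * r) + t ^ 2 * K) : False := by
  set t := min 1 (-2 * r / (K + 1)) with ht
  have ht0 : 0 < t := lt_min one_pos (div_pos (by linarith) (by positivity))
  have ht1 : t ≤ 1 := min_le_left _ _
  have ht2 : t * (K + 1) ≤ -2 * r := by
    calc t * (K + 1) ≤ (-2 * r / (K + 1)) * (K + 1) := by
          apply mul_le_mul_of_nonneg_right (min_le_right _ _); positivity
      _ = -2 * r := by field_simp
  have h5 := h t ht0 ht1
  nlinarith

set_option maxHeartbeats 2000000 in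
/-- Characterization of global minimizers of the trust-region normal subproblem
`min ‖c + Aᵀ v‖²  s.t. ‖v‖ ≤ Δ` (Levenberg–Marquardt characterization). -/
theorem trust_region_normal_subproblem_characterization
    (n m : ℕ) (A : Matrix (Fin n) (Fin m) ℝ) (c : EuclideanSpace ℝ (Fin m))
    (Δ : ℝ) (hΔ : 0 < Δ) (vstar : EuclideanSpace ℝ (Fin n)) :
    (‖vstar‖ ≤ Δ ∧ ∀ v : EuclideanSpace ℝ (Fin n), ‖v‖ ≤ Δ →
        ‖c + toEuclideanLin Aᵀ vstar‖ ^ 2 ≤ ‖c + toEuclideanLin Aᵀ v‖ ^ 2) ↔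
      (‖vstar‖ ≤ Δ ∧ ∃ η : ℝ, 0 ≤ η ∧
        toEuclideanLin (A * Aᵀ + η • (1 : Matrix (Fin n) (Fin n) ℝ)) vstar =
          -(toEuclideanLin A c) ∧
        η * (Δ - ‖vstar‖) = 0) := by
  obtain ⟨T, hT⟩ : ∃ T : EuclideanSpace ℝ (Fin n) →ₗ[ℝ] EuclideanSpace ℝ (Fin m),
      T = toEuclideanLin Aᵀ := ⟨_, rfl⟩
  obtain ⟨S, hS⟩ : ∃ S : EuclideanSpace ℝ (Fin m) →ₗ[ℝ] EuclideanSpace ℝ (Fin n),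
      S = toEuclideanLin A := ⟨_, rfl⟩
  rw [← hT, ← hS]
  have hadj : ∀ (v : EuclideanSpace ℝ (Fin n)) (x : EuclideanSpace ℝ (Fin m)),
      ⟪T v, x⟫ = ⟪v, S x⟫ := by
    intro v x
    have h1 : Aᵀ = Aᴴ := by ext i j; simp [Matrix.conjTranspose_apply]
    rw [hT, hS, h1, Matrix.toEuclideanLin_conjTranspose_eq_adjoint]
    exact LinearMap.adjoint_inner_left _ _ _
  have hmat : ∀ η : ℝ,
      toEuclideanLin (A * Aᵀ + η • (1 : Matrix (Fin n) (Fin n) ℝ)) vstar =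
        S (T vstar) + η • vstar := by
    intro η
    rw [hT, hS]
    simp [Matrix.toEuclideanLin_apply, Matrix.add_mulVec, Matrix.mulVec_mulVec,
      Matrix.smul_mulVec, Matrix.one_mulVec]
  obtain ⟨g, hg⟩ : ∃ g : EuclideanSpace ℝ (Fin n), g = S c + S (T vstar) := ⟨_, rfl⟩
  have expand : ∀ v : EuclideanSpace ℝ (Fin n),
      ‖c + T v‖ ^ 2 = ‖c + T vstar‖ ^ 2 + 2 * ⟪g, v - vstar⟫ + ‖T (v - vstar)‖ ^ 2 := by
    intro v
    have h1 : c + T v = (c + T vstar) + T (v - vstar) := by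
      rw [map_sub]; abel
    rw [h1, norm_add_sq_real]
    have h2 : ⟪c + T vstar, T (v - vstar)⟫ = ⟪g, v - vstar⟫ := by
      rw [real_inner_comm, hadj, map_add, ← hg, real_inner_comm]
    rw [h2]
  constructor
  · rintro ⟨hle, hmin⟩
    refine ⟨hle, ?_⟩
    have VI : ∀ v : EuclideanSpace ℝ (Fin n), ‖v‖ ≤ Δ → 0 ≤ ⟪g, v - vstar⟫ := by
      intro v hv
      by_contra hneg
      push_neg at hneg
      refine trn_aux_arith ⟪g, v - vstar⟫ (‖T (v - vstar)‖ ^ 2) hneg (sq_nonneg _) ?_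
      intro t ht0 ht1
      have hfeas : ‖vstar + t • (v - vstar)‖ ≤ Δ := by
        have heq : vstar + t • (v - vstar) = (1 - t) • vstar + t • v := by module
        rw [heq]
        calc ‖(1 - t) • vstar + t • v‖ ≤ ‖(1 - t) • vstar‖ + ‖t • v‖ := norm_add_le _ _
          _ = (1 - t) * ‖vstar‖ + t * ‖v‖ := by
              rw [norm_smul, norm_smul, Real.norm_eq_abs, Real.norm_eq_abs,
                abs_of_nonneg (by linarith), abs_of_nonneg (le_of_lt ht0)]
          _ ≤ (1 - t) * Δ + t * Δ := by
              apply add_le_add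
              · exact mul_le_mul_of_nonneg_left hle (by linarith)
              · exact mul_le_mul_of_nonneg_left hv (le_of_lt ht0)
          _ = Δ := by ring
      have hm := hmin _ hfeas
      rw [expand (vstar + t • (v - vstar))] at hm
      have hsimp : vstar + t • (v - vstar) - vstar = t • (v - vstar) := by abel
      rw [hsimp] at hm
      have h3 : ⟪g, t • (v - vstar)⟫ = t * ⟪g, v - vstar⟫ := real_inner_smul_right _ _ _
      have h4 : ‖T (t • (v - vstar))‖ ^ 2 = t ^ 2 * ‖T (v - vstar)‖ ^ 2 := by
        rw [_root_.map_smul, norm_smul, Real.norm_eq_abs, mul_pow, sq_abs]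
      rw [h3, h4] at hm
      linarith
    by_cases hgz : g = 0
    · refine ⟨0, le_refl 0, ?_, by ring⟩
      rw [hmat]
      have h0 : S (T vstar) = -(S c) := by
        have h' : S c + S (T vstar) = 0 := by rw [← hg, hgz]
        linear_combination (norm := module) h'
      rw [h0]; simp
    · have hball : ‖vstar‖ = Δ := by
        by_contra hne
        have hlt : ‖vstar‖ < Δ := lt_of_le_of_ne hle hne
        obtain ⟨s, hs⟩ : ∃ s : ℝ, s = (Δ - ‖vstar‖) / (‖g‖ + 1) := ⟨_, rfl⟩
        have hgpos : 0 < ‖g‖ := norm_pos_iff.mpr hgz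
        have hs0 : 0 < s := hs ▸ div_pos (by linarith) (by positivity)
        have hfeas : ‖vstar - s • g‖ ≤ Δ := by
          calc ‖vstar - s • g‖ ≤ ‖vstar‖ + ‖s • g‖ := norm_sub_le _ _
            _ = ‖vstar‖ + s * ‖g‖ := by
                rw [norm_smul, Real.norm_eq_abs, abs_of_nonneg (le_of_lt hs0)]
            _ ≤ ‖vstar‖ + s * (‖g‖ + 1) := by nlinarith
            _ = Δ := by rw [hs]; field_simp; ring
        have h1 := VI _ hfeas
        have h2 : vstar - s • g - vstar = -(s • g) := by abel
        rw [h2, inner_neg_right, real_inner_smul_right, real_inner_self_eq_norm_sq] at h1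
        nlinarith [mul_pos hs0 (pow_pos hgpos 2)]
      obtain ⟨η, hη⟩ : ∃ η : ℝ, η = ‖g‖ / Δ := ⟨_, rfl⟩
      have hgpos : 0 < ‖g‖ := norm_pos_iff.mpr hgz
      have hη0 : 0 ≤ η := hη ▸ by positivity
      refine ⟨η, hη0, ?_, by rw [hball]; ring⟩
      have hinner : ⟪g, vstar⟫ = -(‖g‖ * Δ) := by
        have hfeas : ‖(-(Δ / ‖g‖)) • g‖ ≤ Δ := by
          rw [norm_smul, Real.norm_eq_abs, abs_neg, abs_of_nonneg (by positivity),
            div_mul_cancel₀ _ (ne_of_gt hgpos)]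
        have h1 := VI _ hfeas
        rw [inner_sub_right, real_inner_smul_right, real_inner_self_eq_norm_sq] at h1
        have h2 : ⟪g, vstar⟫ ≤ -(Δ / ‖g‖) * ‖g‖ ^ 2 := by linarith
        have h3 : -(Δ / ‖g‖) * ‖g‖ ^ 2 = -(‖g‖ * Δ) := by field_simp
        have h4 : -(‖g‖ * ‖vstar‖) ≤ ⟪g, vstar⟫ := by
          have ha := abs_real_inner_le_norm g vstar
          have hb := neg_abs_le (⟪g, vstar⟫ : ℝ)
          linarith
        rw [hball] at h4
        linarith [h2.trans_eq h3]
      have hzero : g + η • vstar = 0 := by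
        have hsq : ‖g + η • vstar‖ ^ 2 = 0 := by
          rw [norm_add_sq_real, real_inner_smul_right, hinner, norm_smul, Real.norm_eq_abs,
            abs_of_nonneg hη0, hball, hη]
          field_simp
          ring
        have hn : ‖g + η • vstar‖ = 0 := pow_eq_zero_iff (two_ne_zero) |>.mp hsq
        exact norm_eq_zero.mp hn
      rw [hmat]
      have h5 : S (T vstar) + η • vstar = -(S c) := by
        have h' : (S c + S (T vstar)) + η • vstar = 0 := by rw [← hg]; exact hzero
        linear_combination (norm := module) h'
      rw [h5]
  · rintro ⟨hle, η, hη0, heq, hcomp⟩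
    refine ⟨hle, fun v hv => ?_⟩
    rw [hmat] at heq
    have hgeq : g = -(η • vstar) := by
      rw [hg]; linear_combination (norm := module) heq
    rw [expand v]
    have h2 : 0 ≤ ⟪g, v - vstar⟫ := by
      have h1 : ⟪g, v - vstar⟫ = -η * (⟪vstar, v⟫ - ‖vstar‖ ^ 2) := by
        rw [hgeq, inner_neg_left, real_inner_smul_left, inner_sub_right,
          real_inner_self_eq_norm_sq]
        ring
      rcases eq_or_lt_of_le hη0 with h | h
      · rw [h1, ← h]; ring_nf; rfl
      · have hball : ‖vstar‖ = Δ := by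
          rcases mul_eq_zero.mp hcomp with h' | h'
          · exact absurd h'.symm (ne_of_lt h)
          · linarith
        have hcs : ⟪vstar, v⟫ ≤ ‖vstar‖ * ‖v‖ := real_inner_le_norm _ _
        have hb : ⟪vstar, v⟫ ≤ ‖vstar‖ ^ 2 := by
          rw [hball] at hcs ⊢; nlinarith
        rw [h1]
        nlinarith
    nlinarith [sq_nonneg ‖T (v - vstar)‖]
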